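/- arXiv:1909.07496 — 2 statements merged into one kernel-verified Lean document; each statement's English description precedes it below -/
import Mathlib

section
/- Let f₀, β : EuclideanSpace ℝ (Fin 2) → ℝ be differentiable, let k > 0, and let φ(q) = f₀(q)/(f₀(q)^k + β(q))^(1/k) be the Rimon–Koditschek potential. Let p : ℝ → EuclideanSpace ℝ (Fin 2) be differentiable at t₀ and suppose p'(t₀) = −c·(I + γ·J)(∇φ(p(t₀))) for real constants c and γ. If β(p(t₀)) = 0 and f₀(p(t₀)) > 0, then the composite function β ∘ p is differentiable at t₀ with derivative (β ∘ p)'(t₀) = (c/k) · f₀(p(t₀))^(−k) · ‖∇β(p(t₀))‖². -/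
/-- The skew-symmetric rotation `J = [[0,1],[-1,0]]` on the plane: `J(v₁,v₂) = (v₂,-v₁)`. -/
noncomputable def Jmap (v : EuclideanSpace ℝ (Fin 2)) : EuclideanSpace ℝ (Fin 2) :=
  !₂[v 1, -v 0]

/-- Along a trajectory of the averaged extremum-seeking dynamics
`p' = -c (I + γ J) ∇φ(p)` for the Rimon–Koditschek potential
`φ(q) = f₀(q)/(f₀(q)^k + β(q))^(1/k)`, at a time `t₀` where the trajectory lies on an
obstacle boundary (`β(p(t₀)) = 0`, `f₀(p(t₀)) > 0`), the function `β ∘ p` is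
differentiable with derivative `(c/k) f₀(p(t₀))^(-k) ‖∇β(p(t₀))‖²`. -/
theorem deriv_beta_along_averaged_trajectory
    (f₀ β : EuclideanSpace ℝ (Fin 2) → ℝ)
    (hf₀ : Differentiable ℝ f₀) (hβ : Differentiable ℝ β)
    (k c γ : ℝ) (hk : 0 < k)
    (p : ℝ → EuclideanSpace ℝ (Fin 2)) (t₀ : ℝ) (hp : DifferentiableAt ℝ p t₀)
    (hode : deriv p t₀ =
      -c • (gradient (fun q => f₀ q / (f₀ q ^ k + β q) ^ (1 / k)) (p t₀) +
        γ • Jmap (gradient (fun q => f₀ q / (f₀ q ^ k + β q) ^ (1 / k)) (p t₀))))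
    (hβ0 : β (p t₀) = 0) (hfpos : 0 < f₀ (p t₀)) :
    DifferentiableAt ℝ (β ∘ p) t₀ ∧
      deriv (β ∘ p) t₀ = c / k * f₀ (p t₀) ^ (-k) * ‖gradient β (p t₀)‖ ^ 2 := by
  set x₀ := p t₀ with hx₀
  set a := f₀ x₀ with ha
  have hane : a ≠ 0 := hfpos.ne'
  have hβd : HasFDerivAt β (fderiv ℝ β x₀) x₀ := (hβ x₀).hasFDerivAt
  have hf₀d : HasFDerivAt f₀ (fderiv ℝ f₀ x₀) x₀ := (hf₀ x₀).hasFDerivAt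
  -- derivative of g = f₀^k + β
  have hgx : f₀ x₀ ^ k + β x₀ = a ^ k := by rw [hβ0]; ring
  have hg : HasFDerivAt (fun q => f₀ q ^ k + β q)
      ((k * a ^ (k - 1)) • fderiv ℝ f₀ x₀ + fderiv ℝ β x₀) x₀ :=
    (hf₀d.rpow_const (Or.inl hane)).add hβd
  -- derivative of D = g^(1/k)
  have hakpos : (0 : ℝ) < a ^ k := Real.rpow_pos_of_pos hfpos k
  have hgne : f₀ x₀ ^ k + β x₀ ≠ 0 := by rw [hgx]; exact hakpos.ne'
  have hDx : (f₀ x₀ ^ k + β x₀) ^ (1 / k) = a := by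
    rw [hgx, ← Real.rpow_mul hfpos.le, mul_one_div_cancel hk.ne', Real.rpow_one]
  have hDexp : (f₀ x₀ ^ k + β x₀) ^ (1 / k - 1) = a ^ (1 - k) := by
    rw [hgx, ← Real.rpow_mul hfpos.le]
    congr 1
    field_simp
  have hD : HasFDerivAt (fun q => (f₀ q ^ k + β q) ^ (1 / k))
      ((1 / k * a ^ (1 - k)) • ((k * a ^ (k - 1)) • fderiv ℝ f₀ x₀ + fderiv ℝ β x₀)) x₀ := by
    have := hg.rpow_const (p := 1 / k) (Or.inl hgne)
    rwa [hDexp] at this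
  -- derivative of D⁻¹
  have hinv : HasFDerivAt (fun q => ((f₀ q ^ k + β q) ^ (1 / k))⁻¹)
      ((-(a ^ 2)⁻¹) • ((1 / k * a ^ (1 - k)) • ((k * a ^ (k - 1)) • fderiv ℝ f₀ x₀ +
        fderiv ℝ β x₀))) x₀ := by
    have hi : HasDerivAt (fun y : ℝ => y⁻¹) (-(a ^ 2)⁻¹)
        ((f₀ x₀ ^ k + β x₀) ^ (1 / k)) := by
      rw [hDx]; exact hasDerivAt_inv hane
    exact hi.comp_hasFDerivAt x₀ hD
  -- derivative of φ = f₀ * D⁻¹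
  have hφ : HasFDerivAt (fun q => f₀ q / (f₀ q ^ k + β q) ^ (1 / k))
      ((-(a ^ (-k)) / k) • fderiv ℝ β x₀) x₀ := by
    have h := hf₀d.mul hinv
    rw [hDx] at h
    simp only [div_eq_mul_inv]
    refine h.congr_fderiv ?_
    symm
    ext v
    simp only [ContinuousLinearMap.smul_apply, ContinuousLinearMap.add_apply, smul_eq_mul]
    have h2 : a ^ (1 - k) = a ^ (-k) * a := by
      rw [← Real.rpow_add_one hane]; ring_nf
    have hu : a ^ (-k) * a * a ^ (k - 1) = 1 := by
      rw [← Real.rpow_add_one hane, ← Real.rpow_add hfpos]; norm_num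
    rw [h2]
    generalize (fderiv ℝ f₀ x₀) v = F
    generalize (fderiv ℝ β x₀) v = B
    generalize hw : a ^ (k - 1) = w at hu
    generalize hU : a ^ (-k) = u at hu ⊢
    have : f₀ x₀ = a := rfl
    rw [this]
    field_simp
    linear_combination (k * F) * hu
  -- gradient of φ
  have hgradφ : gradient (fun q => f₀ q / (f₀ q ^ k + β q) ^ (1 / k)) x₀
      = (-(a ^ (-k)) / k) • gradient β x₀ := by
    rw [gradient, hφ.fderiv, map_smul, gradient]
  have hJs : ∀ (r : ℝ) (v : EuclideanSpace ℝ (Fin 2)), Jmap (r • v) = r • Jmap v := by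
    intro r v
    ext i
    fin_cases i <;> simp [Jmap, PiLp.smul_apply, smul_eq_mul]
  have hode' : deriv p t₀ =
      (c * a ^ (-k) / k) • (gradient β x₀ + γ • Jmap (gradient β x₀)) := by
    rw [hode, hgradφ, hJs, smul_comm γ, ← smul_add, smul_smul]
    congr 1
    ring
  have hchain : HasDerivAt (β ∘ p) ((fderiv ℝ β x₀) (deriv p t₀)) t₀ :=
    hβd.comp_hasDerivAt t₀ hp.hasDerivAt
  refine ⟨hchain.differentiableAt, ?_⟩
  have hfg : fderiv ℝ β x₀ = (InnerProductSpace.toDual ℝ _) (gradient β x₀) := by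
    rw [gradient, LinearIsometryEquiv.apply_symm_apply]
  have hJ0 : (inner ℝ (gradient β x₀) (Jmap (gradient β x₀)) : ℝ) = 0 := by
    simp [Jmap, PiLp.inner_apply, Fin.sum_univ_two, RCLike.inner_apply, conj_trivial, -inner_gradient_left]
    ring
  have hself : (inner ℝ (gradient β x₀) (gradient β x₀) : ℝ) = ‖gradient β x₀‖ ^ 2 :=
    real_inner_self_eq_norm_sq _
  rw [hchain.deriv, hode', map_smul, hfg]
  simp only [map_add, map_smul, InnerProductSpace.toDual_apply_apply, smul_eq_mul]
  rw [hJ0, hself]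
  ring
end

section
/- Let f₀, β : EuclideanSpace ℝ (Fin 2) → ℝ be continuously differentiable with f₀(q) > 0 for all q, let k > 0, and let φ(q) = f₀(q)/(f₀(q)^k + β(q))^(1/k) be the Rimon–Koditschek potential. Let c > 0 and γ ∈ ℝ, and let p : ℝ → EuclideanSpace ℝ (Fin 2) be differentiable and satisfy, for all t ≥ 0, f₀(p(t))^k + β(p(t)) > 0 and p'(t) = −c·(I + γ·J)(∇φ(p(t))). Assume β(p(0)) > 0 and that ∇β(q) ≠ 0 for every q with β(q) = 0. Then β(p(t)) > 0 for all t ≥ 0; that is, the averaged extremum-seeking trajectory never reaches the obstacle region {q : β(q) ≤ 0}. -/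
open Real Set

lemma fderiv_apply_eq_inner_gradient (f : EuclideanSpace ℝ (Fin 2) → ℝ)
    (x v : EuclideanSpace ℝ (Fin 2)) :
    fderiv ℝ f x v = inner ℝ (gradient f x) v := by
  rw [gradient, ← InnerProductSpace.toDual_apply_apply,
    (InnerProductSpace.toDual ℝ _).apply_symm_apply]

lemma inner_Jmap_self (g : EuclideanSpace ℝ (Fin 2)) : inner ℝ g (Jmap g) = (0:ℝ) := by
  simp [Jmap, PiLp.inner_apply, Fin.sum_univ_two, mul_comm]

/-- **collision avoidance for the averaged dynamics.** If `p` solves the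
averaged extremum-seeking ODE `p' = -c (I + γ J) ∇φ(p)` for the Rimon–Koditschek
potential `φ(q) = f₀(q)/(f₀(q)^k + β(q))^(1/k)`, starts in the free space
(`β(p(0)) > 0`), and `∇β ≠ 0 ` on `{β = 0}`, then `β(p(t)) > 0` for all `t ≥ 0`:
the trajectory never reaches the obstacle region `{β ≤ 0}`. -/
theorem averaged_trajectory_collision_free
    (f₀ β : EuclideanSpace ℝ (Fin 2) → ℝ)
    (hf₀ : ContDiff ℝ 1 f₀) (hβ : ContDiff ℝ 1 β)
    (hfpos : ∀ q, 0 < f₀ q)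
    (k c γ : ℝ) (hk : 0 < k) (hc : 0 < c)
    (p : ℝ → EuclideanSpace ℝ (Fin 2)) (hp : Differentiable ℝ p)
    (hden : ∀ t, 0 ≤ t → 0 < f₀ (p t) ^ k + β (p t))
    (hode : ∀ t, 0 ≤ t → deriv p t =
      -c • (gradient (fun q => f₀ q / (f₀ q ^ k + β q) ^ (1 / k)) (p t) +
        γ • Jmap (gradient (fun q => f₀ q / (f₀ q ^ k + β q) ^ (1 / k)) (p t))))
    (h0 : 0 < β (p 0))
    (hgradβ : ∀ q, β q = 0 → gradient β q ≠ 0) :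
    ∀ t, 0 ≤ t → 0 < β (p t) := by
  set φ : EuclideanSpace ℝ (Fin 2) → ℝ := fun q => f₀ q / (f₀ q ^ k + β q) ^ (1 / k) with hφdef
  -- φ q < 1 ↔ 0 < β q whenever the denominator is positive
  have key : ∀ q, 0 < f₀ q ^ k + β q → (φ q < 1 ↔ 0 < β q) := by
    intro q hD
    have hf := hfpos q
    have hDpow : 0 < (f₀ q ^ k + β q) ^ (1 / k) := Real.rpow_pos_of_pos hD _
    have hDk : ((f₀ q ^ k + β q) ^ (1 / k)) ^ k = f₀ q ^ k + β q := by
      rw [← Real.rpow_mul hD.le, one_div_mul_cancel hk.ne', Real.rpow_one]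
    rw [hφdef]
    simp only
    rw [div_lt_one hDpow, ← Real.rpow_lt_rpow_iff hf.le hDpow.le hk, hDk]
    exact lt_add_iff_pos_right _
  -- differentiability of φ at points with positive denominator
  have hφdiff : ∀ x : EuclideanSpace ℝ (Fin 2), 0 < f₀ x ^ k + β x → DifferentiableAt ℝ φ x := by
    intro x hD
    have hf := (hf₀.differentiable one_ne_zero).differentiableAt (x := x)
    have hDd : DifferentiableAt ℝ (fun q => f₀ q ^ k + β q) x :=
      (hf.rpow_const (Or.inl (hfpos x).ne')).add ((hβ.differentiable one_ne_zero).differentiableAt)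
    have hpow : DifferentiableAt ℝ (fun q => (f₀ q ^ k + β q) ^ (1 / k)) x :=
      hDd.rpow_const (Or.inl hD.ne')
    have h2 : DifferentiableAt ℝ (fun q => f₀ q * ((f₀ q ^ k + β q) ^ (1 / k))⁻¹) x :=
      hf.mul (hpow.inv (Real.rpow_pos_of_pos hD _).ne')
    have : DifferentiableAt ℝ (fun q => f₀ q / (f₀ q ^ k + β q) ^ (1 / k)) x := by
      simpa only [div_eq_mul_inv] using h2
    exact this
  -- derivative of φ ∘ p
  have hDeriv : ∀ t : ℝ, 0 ≤ t →
      HasDerivAt (φ ∘ p) (-c * ‖gradient φ (p t)‖ ^ 2) t := by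
    intro t ht
    have hφd := hφdiff (p t) (hden t ht)
    have hcomp : HasDerivAt (φ ∘ p) (fderiv ℝ φ (p t) (deriv p t)) t :=
      hφd.hasFDerivAt.comp_hasDerivAt t (hp t).hasDerivAt
    convert hcomp using 1
    rw [fderiv_apply_eq_inner_gradient, hode t ht]
    set g := gradient φ (p t)
    rw [real_inner_smul_right, inner_add_right, real_inner_smul_right, inner_Jmap_self,
      real_inner_self_eq_norm_sq]
    ring
  -- monotonicity of φ along the trajectory
  have hanti : AntitoneOn (φ ∘ p) (Ici 0) := by
    apply antitoneOn_of_deriv_nonpos (convex_Ici 0)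
    · intro t ht
      exact ((hDeriv t ht).differentiableAt).continuousAt.continuousWithinAt
    · rw [interior_Ici]
      intro t ht
      exact ((hDeriv t (le_of_lt ht)).differentiableAt).differentiableWithinAt
    · rw [interior_Ici]
      intro t ht
      rw [(hDeriv t (le_of_lt ht)).deriv]
      have : (0:ℝ) ≤ ‖gradient φ (p t)‖ ^ 2 := by positivity
      nlinarith
  intro t ht
  have h1 : (φ ∘ p) t ≤ (φ ∘ p) 0 := hanti (self_mem_Ici) ht ht
  have h2 : φ (p 0) < 1 := (key (p 0) (hden 0 le_rfl)).2 h0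
  exact (key (p t) (hden t ht)).1 (lt_of_le_of_lt h1 h2)
end
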